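/- Let Φ(ρ) = Σ_i V_i ρ V_i* be a trace-preserving completely positive map on M_n and let A be a *-subalgebra of M_n contained in {V_i* V_j}'. If R = Φ(I) is invertible, then the map π(A) = R^{-1/2} Φ(A) R^{-1/2} is multiplicative on A: π(A)π(B) = π(AB) for all A, B ∈ A, and satisfies Φ(AX) = π(A)Φ(X) and Φ(XA) = Φ(X)π(A) for all X ∈ M_n. -/

import Mathlib

open Matrix ComplexOrder

/-- The completely positive map with Kraus operators `V i`. -/
noncomputable def krausMap {d n m : ℕ} (V : Fin d → Matrix (Fin m) (Fin n) ℂ) :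
    Matrix (Fin n) (Fin n) ℂ →ₗ[ℂ] Matrix (Fin m) (Fin m) ℂ where
  toFun X := ∑ i, V i * X * (V i)ᴴ
  map_add' X Y := by simp [Matrix.mul_add, Matrix.add_mul, Finset.sum_add_distrib]
  map_smul' c X := by simp [Matrix.mul_smul, Matrix.smul_mul, Finset.smul_sum]

/-- The complementary map `Φ^C(ρ) = ∑_{i,j} tr(ρ V_j* V_i) E_{ij}`. -/
noncomputable def complMap {d n m : ℕ} (V : Fin d → Matrix (Fin m) (Fin n) ℂ) :
    Matrix (Fin n) (Fin n) ℂ →ₗ[ℂ] Matrix (Fin d) (Fin d) ℂ where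
  toFun X := Matrix.of fun i j => (X * ((V j)ᴴ * V i)).trace
  map_add' X Y := by
    ext i j
    simp [Matrix.add_mul]
  map_smul' c X := by
    ext i j
    simp [Matrix.smul_mul]

/-- The compression map `P_Q(X) = Q X Q`. -/
noncomputable def comprMap {n : ℕ} (Q : Matrix (Fin n) (Fin n) ℂ) :
    Matrix (Fin n) (Fin n) ℂ →ₗ[ℂ] Matrix (Fin n) (Fin n) ℂ where
  toFun X := Q * X * Q
  map_add' X Y := by simp [Matrix.mul_add, Matrix.add_mul]
  map_smul' c X := by simp [Matrix.mul_smul, Matrix.smul_mul]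

/-- The orthogonal complement of a set of matrices with respect to the trace
(Hilbert–Schmidt) inner product `⟨A, B⟩ = tr(A* B)`. -/
noncomputable def traceOrthCompl {n : ℕ} (S : Set (Matrix (Fin n) (Fin n) ℂ)) :
    Submodule ℂ (Matrix (Fin n) (Fin n) ℂ) where
  carrier := {X | ∀ A ∈ S, (Aᴴ * X).trace = 0}
  add_mem' := by
    intro a b ha hb A hA
    simp [Matrix.mul_add, ha A hA, hb A hA]
  zero_mem' := by intro A hA; simp
  smul_mem' := by
    intro c x hx A hA
    simp [Matrix.mul_smul, hx A hA]

/-- The commutant of a set of matrices, as a submodule of `M_n`. -/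
noncomputable def commutantSub {n : ℕ} (S : Set (Matrix (Fin n) (Fin n) ℂ)) :
    Submodule ℂ (Matrix (Fin n) (Fin n) ℂ) where
  carrier := {X | ∀ A ∈ S, X * A = A * X}
  add_mem' := by
    intro a b ha hb A hA
    simp [Matrix.mul_add, Matrix.add_mul, ha A hA, hb A hA]
  zero_mem' := by intro A hA; simp
  smul_mem' := by
    intro c x hx A hA
    simp [Matrix.mul_smul, Matrix.smul_mul, hx A hA]

/-- The multiplicative domain of a linear map on `M_n`, as a set. -/
noncomputable def multDomain {n m : ℕ}
    (Φ : Matrix (Fin n) (Fin n) ℂ →ₗ[ℂ] Matrix (Fin m) (Fin m) ℂ) :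
    Set (Matrix (Fin n) (Fin n) ℂ) :=
  {A | ∀ X, Φ (A * X) = Φ A * Φ X ∧ Φ (X * A) = Φ X * Φ A}

/-- The positive semidefinite square root, as `Matrix.PosSemidef.sqrt` was defined in the older
Mathlib (since removed). -/
noncomputable def posSemidefSqrt {n : Type*} [Fintype n] [DecidableEq n] {A : Matrix n n ℂ}
    (hA : A.PosSemidef) : Matrix n n ℂ :=
  hA.1.eigenvectorUnitary.1 * diagonal ((↑) ∘ (√·) ∘ hA.1.eigenvalues) *
  (star hA.1.eigenvectorUnitary : Matrix n n ℂ)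

lemma posSemidefSqrt_mul_self' {n : ℕ} {R : Matrix (Fin n) (Fin n) ℂ} (hR : R.PosSemidef) :
    posSemidefSqrt hR * posSemidefSqrt hR = R := by
  set U : Matrix (Fin n) (Fin n) ℂ := (hR.1.eigenvectorUnitary : Matrix (Fin n) (Fin n) ℂ)
  have hU1 : star U * U = 1 := Unitary.coe_star_mul_self hR.1.eigenvectorUnitary
  have hspec : R = U * diagonal (RCLike.ofReal ∘ hR.1.eigenvalues) * star U :=
    hR.1.spectral_theorem
  set D : Matrix (Fin n) (Fin n) ℂ := diagonal ((↑) ∘ Real.sqrt ∘ hR.1.eigenvalues)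
  have hD : D * D = diagonal (RCLike.ofReal ∘ hR.1.eigenvalues) := by
    rw [diagonal_mul_diagonal]
    congr 1
    funext i
    simp only [Function.comp_apply]
    rw [← Complex.ofReal_mul, Real.mul_self_sqrt (hR.eigenvalues_nonneg i)]
    rfl
  calc posSemidefSqrt hR * posSemidefSqrt hR = (U * D * star U) * (U * D * star U) := rfl
    _ = U * (D * D) * star U := by
        simp only [← mul_assoc]
        rw [mul_assoc (U * D) (star U) U, hU1, mul_one]
    _ = R := by rw [hD, ← hspec]

lemma commute_sqrt_of_commute {n : ℕ} {R B : Matrix (Fin n) (Fin n) ℂ} (hR : R.PosSemidef)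
    (h : B * R = R * B) : B * posSemidefSqrt hR = posSemidefSqrt hR * B := by
  set U : Matrix (Fin n) (Fin n) ℂ := (hR.1.eigenvectorUnitary : Matrix (Fin n) (Fin n) ℂ) with hUdef
  have hU1 : star U * U = 1 := Unitary.coe_star_mul_self hR.1.eigenvectorUnitary
  have hU2 : U * star U = 1 := Unitary.coe_mul_star_self hR.1.eigenvectorUnitary
  set B' : Matrix (Fin n) (Fin n) ℂ := star U * B * U with hB'
  set ev := hR.1.eigenvalues
  have hspec : R = U * diagonal (RCLike.ofReal ∘ ev) * star U := hR.1.spectral_theorem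
  -- B' commutes with diagonal ev
  have hcd : B' * diagonal (RCLike.ofReal ∘ ev) = diagonal (RCLike.ofReal ∘ ev) * B' := by
    have := congrArg (fun M => star U * M * U) h
    simp only [hspec] at this
    calc B' * diagonal (RCLike.ofReal ∘ ev)
        = star U * B * (U * diagonal (RCLike.ofReal ∘ ev) * star U) * U := by
          simp only [hB', mul_assoc, hU1, mul_one]
      _ = star U * (B * (U * diagonal (RCLike.ofReal ∘ ev) * star U)) * U := by
          simp only [mul_assoc]
      _ = star U * ((U * diagonal (RCLike.ofReal ∘ ev) * star U) * B) * U := by rw [← hspec, h]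
      _ = diagonal (RCLike.ofReal ∘ ev) * B' := by
          simp only [hB', mul_assoc, hU1, one_mul]
          simp only [← mul_assoc, hU1, one_mul]
  have hcd' : B' * diagonal ((↑) ∘ Real.sqrt ∘ ev) = diagonal ((↑) ∘ Real.sqrt ∘ ev) * B' := by
    ext i j
    have h1 := congrFun (congrFun hcd i) j
    simp only [mul_diagonal, diagonal_mul, Function.comp_apply] at h1 ⊢
    rcases eq_or_ne (B' i j) 0 with h0 | h0
    · simp [h0]
    · have : (ev j : ℂ) = ev i := by
        field_simp at h1
        exact mul_right_cancel₀ h0 (by linear_combination B' i j * h1)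
      have : ev j = ev i := by exact_mod_cast this
      rw [this, mul_comm]
  -- conjugate back
  calc B * posSemidefSqrt hR = B * (U * diagonal ((↑) ∘ Real.sqrt ∘ ev) * star U) := rfl
    _ = U * (B' * diagonal ((↑) ∘ Real.sqrt ∘ ev)) * star U := by
        simp only [hB', mul_assoc, hU2]
        try simp only [← mul_assoc, hU2, one_mul, mul_one]
        try simp only [mul_assoc]
    _ = U * (diagonal ((↑) ∘ Real.sqrt ∘ ev) * B') * star U := by rw [hcd']
    _ = (U * diagonal ((↑) ∘ Real.sqrt ∘ ev) * star U) * B := by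
        simp only [hB', mul_assoc, hU2, mul_one]
        try simp only [← mul_assoc, hU2, one_mul]
    _ = posSemidefSqrt hR * B := rfl

/-- if `A ⊆ {V_i* V_j}'` and `R = Φ(I)` is invertible, then
`π(A) = R^{-1/2} Φ(A) R^{-1/2}` is multiplicative on `A` and satisfies
`Φ(AX) = π(A)Φ(X)` and `Φ(XA) = Φ(X)π(A)`. -/
theorem stmt_8 {d n : ℕ} (V : Fin d → Matrix (Fin n) (Fin n) ℂ)
    (hV : ∑ i, (V i)ᴴ * V i = 1)
    (A : NonUnitalStarSubalgebra ℂ (Matrix (Fin n) (Fin n) ℂ))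
    (hA : ∀ a ∈ A, ∀ i j, a * ((V i)ᴴ * V j) = ((V i)ᴴ * V j) * a)
    (hR : (krausMap V 1).PosSemidef) (hRinv : IsUnit (krausMap V (1 : Matrix (Fin n) (Fin n) ℂ))) :
    ∀ a ∈ A, ∀ b ∈ A,
      (((posSemidefSqrt hR)⁻¹ * krausMap V a * (posSemidefSqrt hR)⁻¹) * ((posSemidefSqrt hR)⁻¹ * krausMap V b * (posSemidefSqrt hR)⁻¹) =
        (posSemidefSqrt hR)⁻¹ * krausMap V (a * b) * (posSemidefSqrt hR)⁻¹) ∧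
      (∀ X, krausMap V (a * X) = ((posSemidefSqrt hR)⁻¹ * krausMap V a * (posSemidefSqrt hR)⁻¹) * krausMap V X) ∧
      (∀ X, krausMap V (X * a) = krausMap V X * ((posSemidefSqrt hR)⁻¹ * krausMap V a * (posSemidefSqrt hR)⁻¹)) := by
  intro a ha b hb
  set Φ := krausMap V with hΦdef
  set R := Φ (1 : Matrix (Fin n) (Fin n) ℂ) with hRdef'
  have hΦ : ∀ X, Φ X = ∑ i, V i * X * (V i)ᴴ := fun X => rfl
  have hRdef : R = ∑ i, V i * (V i)ᴴ := by simp [hRdef', hΦ]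
  have hRdet : IsUnit R.det := (Matrix.isUnit_iff_isUnit_det _).mp hRinv
  have hRinvmul : R⁻¹ * R = 1 := Matrix.nonsing_inv_mul R hRdet
  have hRmulinv : R * R⁻¹ = 1 := Matrix.mul_nonsing_inv R hRdet
  have h1 : ∀ a ∈ A, ∀ i, R * (V i * a) = Φ a * V i := by
    intro a ha i
    rw [hRdef, hΦ, Finset.sum_mul, Finset.sum_mul]
    refine Finset.sum_congr rfl fun j _ => ?_
    calc V j * (V j)ᴴ * (V i * a) = V j * ((V j)ᴴ * V i * a) := by
          simp only [mul_assoc]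
      _ = V j * (a * ((V j)ᴴ * V i)) := by rw [(hA a ha j i).symm]
      _ = V j * a * (V j)ᴴ * V i := by simp only [mul_assoc]
  have h2 : ∀ a ∈ A, ∀ i, V i * a = R⁻¹ * (Φ a * V i) := by
    intro a ha i
    rw [← h1 a ha i, ← mul_assoc, hRinvmul, one_mul]
  have h3 : ∀ a ∈ A, Φ a * R = R * Φ a := by
    intro a ha
    calc Φ a * R = ∑ i, Φ a * V i * (V i)ᴴ := by
          rw [hRdef, Finset.mul_sum]; simp only [mul_assoc]
      _ = ∑ i, R * (V i * a * (V i)ᴴ) := by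
          refine Finset.sum_congr rfl fun i _ => ?_
          rw [← h1 a ha i]; try simp only [mul_assoc]
      _ = R * Φ a := by rw [hΦ a, Finset.mul_sum]; try simp only [mul_assoc]
  have h3' : ∀ a ∈ A, Φ a * R⁻¹ = R⁻¹ * Φ a := by
    intro a ha
    calc Φ a * R⁻¹ = R⁻¹ * R * (Φ a * R⁻¹) := by rw [hRinvmul, one_mul]
      _ = R⁻¹ * (R * Φ a * R⁻¹) := by simp only [mul_assoc]
      _ = R⁻¹ * (Φ a * R * R⁻¹) := by rw [h3 a ha]
      _ = R⁻¹ * (Φ a * (R * R⁻¹)) := by simp only [mul_assoc]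
      _ = R⁻¹ * Φ a := by rw [hRmulinv, mul_one]
  have h4 : ∀ a ∈ A, ∀ X, Φ (a * X) = R⁻¹ * Φ a * Φ X := by
    intro a ha X
    calc Φ (a * X) = ∑ i, V i * a * X * (V i)ᴴ := by rw [hΦ (a * X)]; simp only [mul_assoc]
      _ = ∑ i, R⁻¹ * Φ a * (V i * X * (V i)ᴴ) := by
          refine Finset.sum_congr rfl fun i _ => ?_
          rw [show V i * a * X * (V i)ᴴ = V i * a * (X * (V i)ᴴ) by simp only [mul_assoc],
            h2 a ha i]
          simp only [mul_assoc]
      _ = R⁻¹ * Φ a * ∑ i, V i * X * (V i)ᴴ := by rw [Finset.mul_sum]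
      _ = R⁻¹ * Φ a * Φ X := by rw [← hΦ X]
  have hstar : ∀ a, Φ aᴴ = (Φ a)ᴴ := by
    intro a
    rw [hΦ, hΦ, conjTranspose_sum]
    refine Finset.sum_congr rfl fun i _ => ?_
    simp [Matrix.conjTranspose_mul, mul_assoc]
  have hRH : Rᴴ = R := by
    rw [hRdef, conjTranspose_sum]
    refine Finset.sum_congr rfl fun i _ => ?_
    simp [Matrix.conjTranspose_mul]
  have hRiH : (R⁻¹)ᴴ = R⁻¹ := by rw [Matrix.conjTranspose_nonsing_inv, hRH]
  have h5 : ∀ a ∈ A, ∀ i, a * (V i)ᴴ = (V i)ᴴ * Φ a * R⁻¹ := by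
    intro a ha i
    have haH : aᴴ ∈ A := star_mem ha
    have := h2 aᴴ haH i
    have h' := congrArg conjTranspose this
    simp only [Matrix.conjTranspose_mul, conjTranspose_conjTranspose, hstar, hRiH] at h'
    rw [h']
    try simp only [mul_assoc]
  have h6 : ∀ a ∈ A, ∀ X, Φ (X * a) = Φ X * Φ a * R⁻¹ := by
    intro a ha X
    calc Φ (X * a) = ∑ i, V i * X * (a * (V i)ᴴ) := by rw [hΦ (X * a)]; simp only [mul_assoc]
      _ = ∑ i, V i * X * (V i)ᴴ * (Φ a * R⁻¹) := by
          refine Finset.sum_congr rfl fun i _ => ?_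
          rw [h5 a ha i]; simp only [mul_assoc]
      _ = (∑ i, V i * X * (V i)ᴴ) * (Φ a * R⁻¹) := by rw [Finset.sum_mul]
      _ = Φ X * Φ a * R⁻¹ := by rw [← hΦ X, ← mul_assoc]
  -- square root facts
  set S := posSemidefSqrt hR with hSdef
  have hSS : S * S = R := posSemidefSqrt_mul_self' hR
  have hSdet : IsUnit S.det := by
    have : IsUnit (S.det * S.det) := by
      rw [← Matrix.det_mul, hSS]; exact hRdet
    exact isUnit_of_mul_isUnit_left this
  have hSinvmul : S⁻¹ * S = 1 := Matrix.nonsing_inv_mul S hSdet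
  have hSmulinv : S * S⁻¹ = 1 := Matrix.mul_nonsing_inv S hSdet
  have hinvinv : S⁻¹ * S⁻¹ = R⁻¹ := by rw [← Matrix.mul_inv_rev, hSS]
  have hScomm : ∀ a ∈ A, Φ a * S = S * Φ a := fun a ha =>
    commute_sqrt_of_commute hR (h3 a ha)
  have hScomm' : ∀ a ∈ A, Φ a * S⁻¹ = S⁻¹ * Φ a := by
    intro a ha
    calc Φ a * S⁻¹ = S⁻¹ * S * (Φ a * S⁻¹) := by rw [hSinvmul, one_mul]
      _ = S⁻¹ * (S * Φ a * S⁻¹) := by simp only [mul_assoc]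
      _ = S⁻¹ * (Φ a * S * S⁻¹) := by rw [hScomm a ha]
      _ = S⁻¹ * (Φ a * (S * S⁻¹)) := by simp only [mul_assoc]
      _ = S⁻¹ * Φ a := by rw [hSmulinv, mul_one]
  have hπ : ∀ a ∈ A, S⁻¹ * Φ a * S⁻¹ = Φ a * R⁻¹ := by
    intro a ha
    rw [← hScomm' a ha, mul_assoc, hinvinv]
  refine ⟨?_, ?_, ?_⟩
  · rw [hπ a ha, hπ b hb, hπ (a * b) (mul_mem ha hb), h4 a ha b, h3' a ha]
    calc R⁻¹ * Φ a * (Φ b * R⁻¹) = R⁻¹ * Φ a * Φ b * R⁻¹ := by simp only [mul_assoc]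
      _ = R⁻¹ * (Φ a * Φ b) * R⁻¹ := by simp only [mul_assoc]
      _ = R⁻¹ * Φ a * Φ b * R⁻¹ := by simp only [mul_assoc]
  · intro X
    rw [hπ a ha, h4 a ha X, h3' a ha]
  · intro X
    rw [hπ a ha, h6 a ha X, mul_assoc]
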